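/- There exists a constant c > 0 (depending only on α and H) such that for all reals 0 ≤ s ≤ t, C_H · [ ∫_0^s ∫_ℝ ( exp(−(t−r)|ξ|^α) − exp(−(s−r)|ξ|^α) )^2 |ξ|^{1−2H} dξ dr + ∫_s^t ∫_ℝ exp(−2(t−r)|ξ|^α) |ξ|^{1−2H} dξ dr ] ≤ c · (t−s)^{2θ}. (The left-hand side equals E[(u(t,x) − u(s,x))^2], so this is the temporal Hölder bound ‖u(t,x) − u(s,x)‖_{L²(Ω)} ≤ c_{2,2}|t−s|^θ of Proposition 2.1(b).) -/

import Mathlib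

open MeasureTheory Real Set

private lemma helper1 {A B : ℝ} (h : B ≤ A) :
    (Real.exp (-A) - Real.exp (-B))^2 ≤ Real.exp (-(2*B)) := by
  have h1 : Real.exp (-A) ≤ Real.exp (-B) := Real.exp_le_exp.2 (by linarith)
  have h2 : 0 < Real.exp (-A) := Real.exp_pos _
  have h3 : Real.exp (-(2*B)) = Real.exp (-B) * Real.exp (-B) := by
    rw [← Real.exp_add]; ring_nf
  nlinarith [Real.exp_pos (-B)]

private lemma helper2 {A B : ℝ} (h : B ≤ A) :
    (Real.exp (-A) - Real.exp (-B))^2 ≤ Real.exp (-(2*B)) * (A - B)^2 := by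
  have e : Real.exp (-A) = Real.exp (-B) * Real.exp (-(A-B)) := by rw [← Real.exp_add]; ring_nf
  have h1 : Real.exp (-(A-B)) ≤ 1 := Real.exp_le_one_iff.2 (by linarith)
  have h2 : 1 - (A-B) ≤ Real.exp (-(A-B)) := by
    have := Real.add_one_le_exp (-(A-B)); linarith
  have h3 : Real.exp (-(2*B)) = Real.exp (-B) * Real.exp (-B) := by rw [← Real.exp_add]; ring_nf
  rw [e, h3]
  have h5 : (Real.exp (-B) * Real.exp (-(A-B)) - Real.exp (-B))^2
      = (Real.exp (-B) * Real.exp (-B)) * (Real.exp (-(A-B)) - 1)^2 := by ring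
  rw [h5]
  have h4 : (Real.exp (-(A-B)) - 1)^2 ≤ (A-B)^2 := by nlinarith
  have h6 : 0 < Real.exp (-B) * Real.exp (-B) := by positivity
  nlinarith

private lemma aux_integrable {α p b : ℝ} (hα : 1 ≤ α) (hp : -1 < p) (hb : 0 < b) :
    Integrable fun ξ : ℝ => Real.exp (-b * |ξ| ^ α) * |ξ| ^ p := by
  have h0 : IntegrableOn (fun ξ : ℝ => Real.exp (-b * |ξ| ^ α) * |ξ| ^ p) (Ioi 0) := by
    refine (integrableOn_rpow_mul_exp_neg_mul_rpow hp (by linarith : (0:ℝ) < α) hb).congr_fun (fun x hx => ?_)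
      measurableSet_Ioi
    rw [abs_of_pos hx, mul_comm]
  rw [← integrableOn_univ, ← Set.Iio_union_Ici (a := (0:ℝ)), integrableOn_union,
    integrableOn_Ici_iff_integrableOn_Ioi]
  refine ⟨?_, h0⟩
  rw [← (Measure.measurePreserving_neg (volume : Measure ℝ)).integrableOn_comp_preimage
      (Homeomorph.neg ℝ).measurableEmbedding]
  simpa only [Function.comp_def, abs_neg, neg_preimage, neg_Iio, neg_zero] using h0

private lemma aux_scaling {α p b v : ℝ} (hα : 0 < α) (hv : 0 < v) :
    ∫ ξ : ℝ, Real.exp (-(b * v) * |ξ| ^ α) * |ξ| ^ p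
      = v ^ (-(p + 1) / α) * ∫ ξ : ℝ, Real.exp (-b * |ξ| ^ α) * |ξ| ^ p := by
  have hαne : α ≠ 0 := hα.ne'
  set a : ℝ := v ^ (α⁻¹) with ha
  have hapos : 0 < a := rpow_pos_of_pos hv _
  have haα : a ^ α = v := by
    rw [ha, ← Real.rpow_mul hv.le, inv_mul_cancel₀ hαne, Real.rpow_one]
  have key : ∀ ξ : ℝ, Real.exp (-b * |a * ξ| ^ α) * |a * ξ| ^ p
      = a ^ p * (Real.exp (-(b * v) * |ξ| ^ α) * |ξ| ^ p) := by
    intro ξ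
    rw [abs_mul, abs_of_pos hapos, Real.mul_rpow hapos.le (abs_nonneg ξ),
      Real.mul_rpow hapos.le (abs_nonneg ξ), haα]
    ring
  have h1 := MeasureTheory.Measure.integral_comp_mul_left
    (fun y : ℝ => Real.exp (-b * |y| ^ α) * |y| ^ p) a
  simp_rw [key] at h1
  rw [integral_const_mul, smul_eq_mul, abs_of_pos (inv_pos.2 hapos)] at h1
  have hexp : a ^ (-(p + 1)) = v ^ (-(p + 1) / α) := by
    rw [ha, ← Real.rpow_mul hv.le]
    congr 1
    field_simp
  have hap : (a : ℝ) ^ p ≠ 0 := (rpow_pos_of_pos hapos p).ne'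
  have e1 : a ^ p * (a ^ (-(p + 1)) * ∫ ξ : ℝ, Real.exp (-b * |ξ| ^ α) * |ξ| ^ p)
      = a⁻¹ * ∫ ξ : ℝ, Real.exp (-b * |ξ| ^ α) * |ξ| ^ p := by
    rw [← mul_assoc, ← Real.rpow_add hapos,
      show p + -(p + 1) = -1 by ring, Real.rpow_neg_one]
  have := mul_left_cancel₀ hap (h1.trans e1.symm)
  rw [this, hexp]

set_option maxHeartbeats 1000000 in
/-- Temporal Hölder bound `‖u(t,x) - u(s,x)‖_{L²(Ω)} ≤ c·|t-s|^θ`: for `α ∈ (1,2]`,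
`H ∈ ((2-α)/2, 1)`, `θ = 1/2 - (1-H)/α` and `C_H = Γ(2H+1)·sin(πH)/(2π)`, there is a
constant `c > 0` such that for all `0 ≤ s ≤ t`,
`C_H · [∫₀ˢ ∫_ℝ (e^{-(t-r)|ξ|^α} - e^{-(s-r)|ξ|^α})² |ξ|^{1-2H} dξ dr
  + ∫ₛᵗ ∫_ℝ e^{-2(t-r)|ξ|^α} |ξ|^{1-2H} dξ dr] ≤ c·(t-s)^{2θ}`. -/
theorem stmt_4 (α H θ C_H : ℝ) (hα₁ : 1 < α) (hα₂ : α ≤ 2)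
    (hH₁ : (2 - α) / 2 < H) (hH₂ : H < 1)
    (hθ : θ = 1 / 2 - (1 - H) / α)
    (hC : C_H = Real.Gamma (2 * H + 1) * Real.sin (Real.pi * H) / (2 * Real.pi)) :
    ∃ c > (0 : ℝ), ∀ s t : ℝ, 0 ≤ s → s ≤ t →
      C_H * ((∫ r in Set.Ioc 0 s, ∫ ξ : ℝ,
          (Real.exp (-(t - r) * |ξ| ^ α) - Real.exp (-(s - r) * |ξ| ^ α)) ^ 2
            * |ξ| ^ (1 - 2 * H))
        + ∫ r in Set.Ioc s t, ∫ ξ : ℝ,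
          Real.exp (-2 * (t - r) * |ξ| ^ α) * |ξ| ^ (1 - 2 * H))
      ≤ c * (t - s) ^ (2 * θ) := by
  have hα0 : (0:ℝ) < α := by linarith
  have hαne : α ≠ 0 := hα0.ne'
  have hH0 : (0:ℝ) < H := by nlinarith
  have hθ0 : 0 < θ := by
    have h2 : (1 - H) / α < 1 / 2 := by rw [div_lt_iff₀ hα0]; nlinarith
    rw [hθ]; linarith
  have hθ1 : θ < 1 / 2 := by
    have : 0 < (1 - H) / α := div_pos (by linarith) hα0
    rw [hθ]; linarith
  have h2θ : 0 < 2 * θ := by linarith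
  have h2θ1 : 2 * θ < 1 := by linarith
  have hne2 : (2 - 2 * θ) ≠ 0 := ne_of_gt (by linarith)
  have hp1 : (-1:ℝ) < 1 - 2 * H := by linarith
  have hp2 : (-1:ℝ) < 2 * α + 1 - 2 * H := by nlinarith
  have hCH : 0 < C_H := by
    rw [hC]
    have h1 : 0 < Real.Gamma (2 * H + 1) := Real.Gamma_pos_of_pos (by linarith)
    have h2 : 0 < Real.sin (Real.pi * H) :=
      Real.sin_pos_of_pos_of_lt_pi (by positivity) (by nlinarith [Real.pi_pos])
    positivity
  set K₁ : ℝ := ∫ ξ : ℝ, Real.exp (-2 * |ξ| ^ α) * |ξ| ^ (1 - 2 * H) with hK₁def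
  set K₂ : ℝ := ∫ ξ : ℝ, Real.exp (-2 * |ξ| ^ α) * |ξ| ^ (2 * α + 1 - 2 * H) with hK₂def
  have hK₁ : 0 ≤ K₁ := integral_nonneg fun ξ => by positivity
  have hK₂ : 0 ≤ K₂ := integral_nonneg fun ξ => by positivity
  have scale1 : ∀ v : ℝ, 0 < v →
      (∫ ξ : ℝ, Real.exp (-(2 * v) * |ξ| ^ α) * |ξ| ^ (1 - 2 * H))
        = v ^ (2 * θ - 1) * K₁ := by
    intro v hv
    rw [aux_scaling hα0 hv, ← hK₁def,
      show -(1 - 2 * H + 1) / α = 2 * θ - 1 by rw [hθ]; field_simp; ring]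
  have scale2 : ∀ v : ℝ, 0 < v →
      (∫ ξ : ℝ, Real.exp (-(2 * v) * |ξ| ^ α) * |ξ| ^ (2 * α + 1 - 2 * H))
        = v ^ (2 * θ - 3) * K₂ := by
    intro v hv
    rw [aux_scaling hα0 hv, ← hK₂def,
      show -(2 * α + 1 - 2 * H + 1) / α = 2 * θ - 3 by rw [hθ]; field_simp; ring]
  have hB : 0 ≤ K₁ / θ + K₂ / (2 - 2 * θ) := by
    have h22 : (0:ℝ) < 2 - 2 * θ := by linarith
    positivity
  refine ⟨C_H * (K₁ / θ + K₂ / (2 - 2 * θ)) + 1, by nlinarith, fun s t hs hst => ?_⟩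
  rcases eq_or_lt_of_le hst with heq | hlt
  · subst heq
    simp [Set.Ioc_self, Real.zero_rpow (ne_of_gt h2θ)]
  -- main case s < t
  have hτ0 : 0 < t - s := sub_pos.2 hlt
  -- J2 bound
  have hJ2 : (∫ r in Set.Ioc s t, ∫ ξ : ℝ,
        Real.exp (-2 * (t - r) * |ξ| ^ α) * |ξ| ^ (1 - 2 * H))
      ≤ K₁ / (2 * θ) * (t - s) ^ (2 * θ) := by
    rw [integral_Ioc_eq_integral_Ioo]
    have hcongr : ∀ r ∈ Set.Ioo s t,
        (∫ ξ : ℝ, Real.exp (-2 * (t - r) * |ξ| ^ α) * |ξ| ^ (1 - 2 * H))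
          = (t - r) ^ (2 * θ - 1) * K₁ := by
      intro r hr
      rw [← scale1 (t - r) (sub_pos.2 hr.2)]
      congr 1
      funext ξ
      rw [show -2 * (t - r) * |ξ| ^ α = -(2 * (t - r)) * |ξ| ^ α by ring]
    rw [setIntegral_congr_fun measurableSet_Ioo (fun r hr => hcongr r hr)]
    rw [← integral_Ioc_eq_integral_Ioo, ← intervalIntegral.integral_of_le hst,
      intervalIntegral.integral_comp_sub_left (fun v => v ^ (2 * θ - 1) * K₁) t, sub_self,
      intervalIntegral.integral_mul_const,
      integral_rpow (Or.inl (by linarith : (-1:ℝ) < 2 * θ - 1)),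
      Real.zero_rpow (ne_of_gt (by linarith : (0:ℝ) < 2 * θ - 1 + 1)),
      show 2 * θ - 1 + 1 = 2 * θ by ring]
    exact le_of_eq (by ring)
  -- J1 analysis
  set g1 : ℝ → ℝ := fun r => ∫ ξ : ℝ,
      (Real.exp (-(t - r) * |ξ| ^ α) - Real.exp (-(s - r) * |ξ| ^ α)) ^ 2
        * |ξ| ^ (1 - 2 * H) with hg1def
  have hg1nonneg : ∀ r, 0 ≤ g1 r := fun r => integral_nonneg fun ξ => by positivity
  have boundA : ∀ r : ℝ, r < s → g1 r ≤ (s - r) ^ (2 * θ - 1) * K₁ := by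
    intro r hr
    have hv : 0 < s - r := sub_pos.2 hr
    have hmono : g1 r ≤ ∫ ξ : ℝ, Real.exp (-(2 * (s - r)) * |ξ| ^ α) * |ξ| ^ (1 - 2 * H) := by
      refine integral_mono_of_nonneg (Filter.Eventually.of_forall fun ξ => by positivity)
        (aux_integrable hα₁.le hp1 (by positivity))
        (Filter.Eventually.of_forall fun ξ => ?_)
      have hAB : (s - r) * |ξ| ^ α ≤ (t - r) * |ξ| ^ α :=
        mul_le_mul_of_nonneg_right (by linarith) (Real.rpow_nonneg (abs_nonneg ξ) α)
      calc (Real.exp (-(t - r) * |ξ| ^ α) - Real.exp (-(s - r) * |ξ| ^ α)) ^ 2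
            * |ξ| ^ (1 - 2 * H)
          ≤ Real.exp (-(2 * ((s - r) * |ξ| ^ α))) * |ξ| ^ (1 - 2 * H) := by
            rw [neg_mul, neg_mul]
            exact mul_le_mul_of_nonneg_right (helper1 hAB)
              (Real.rpow_nonneg (abs_nonneg ξ) _)
        _ = Real.exp (-(2 * (s - r)) * |ξ| ^ α) * |ξ| ^ (1 - 2 * H) := by
            rw [show -(2 * ((s - r) * |ξ| ^ α)) = -(2 * (s - r)) * |ξ| ^ α by ring]
    rwa [scale1 _ hv] at hmono
  have boundB : ∀ r : ℝ, r < s →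
      g1 r ≤ (t - s) ^ 2 * ((s - r) ^ (2 * θ - 3) * K₂) := by
    intro r hr
    have hv : 0 < s - r := sub_pos.2 hr
    have hmono : g1 r ≤ ∫ ξ : ℝ,
        (t - s) ^ 2 * (Real.exp (-(2 * (s - r)) * |ξ| ^ α) * |ξ| ^ (2 * α + 1 - 2 * H)) := by
      refine integral_mono_of_nonneg (Filter.Eventually.of_forall fun ξ => by positivity)
        ((aux_integrable hα₁.le hp2 (by positivity)).const_mul _)
        (Filter.Eventually.of_forall fun ξ => ?_)
      rcases eq_or_ne ξ 0 with rfl | hξ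
      · have h1 : |(0:ℝ)| ^ α = 0 := by rw [abs_zero, Real.zero_rpow hαne]
        dsimp only
        have hL : (Real.exp (-(t - r) * |(0:ℝ)| ^ α)
            - Real.exp (-(s - r) * |(0:ℝ)| ^ α)) ^ 2 * |(0:ℝ)| ^ (1 - 2 * H) = 0 := by
          rw [h1]; simp
        rw [hL]
        positivity
      · have hx : 0 < |ξ| := abs_pos.2 hξ
        have hAB : (s - r) * |ξ| ^ α ≤ (t - r) * |ξ| ^ α :=
          mul_le_mul_of_nonneg_right (by linarith) (Real.rpow_nonneg (abs_nonneg ξ) α)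
        calc (Real.exp (-(t - r) * |ξ| ^ α) - Real.exp (-(s - r) * |ξ| ^ α)) ^ 2
              * |ξ| ^ (1 - 2 * H)
            ≤ (Real.exp (-(2 * ((s - r) * |ξ| ^ α)))
                * ((t - r) * |ξ| ^ α - (s - r) * |ξ| ^ α) ^ 2) * |ξ| ^ (1 - 2 * H) := by
              rw [neg_mul, neg_mul]
              exact mul_le_mul_of_nonneg_right (helper2 hAB)
                (Real.rpow_nonneg (abs_nonneg ξ) _)
          _ = (t - s) ^ 2 * (Real.exp (-(2 * ((s - r) * |ξ| ^ α)))
                * (|ξ| ^ α * |ξ| ^ α * |ξ| ^ (1 - 2 * H))) := by ring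
          _ = (t - s) ^ 2
                * (Real.exp (-(2 * (s - r)) * |ξ| ^ α) * |ξ| ^ (2 * α + 1 - 2 * H)) := by
              rw [← Real.rpow_add hx, ← Real.rpow_add hx,
                show α + α + (1 - 2 * H) = 2 * α + 1 - 2 * H by ring,
                show -(2 * ((s - r) * |ξ| ^ α)) = -(2 * (s - r)) * |ξ| ^ α by ring]
    rw [integral_const_mul, scale2 _ hv] at hmono
    exact hmono
  have hg1meas : StronglyMeasurable g1 := by
    have hxα : Measurable fun q : ℝ × ℝ => |q.2| ^ α := measurable_snd.abs.pow_const α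
    have hm : Measurable fun q : ℝ × ℝ =>
        (Real.exp (-(t - q.1) * |q.2| ^ α) - Real.exp (-(s - q.1) * |q.2| ^ α)) ^ 2
          * |q.2| ^ (1 - 2 * H) := by
      exact ((((measurable_const.sub measurable_fst).neg.mul hxα).exp.sub
        ((measurable_const.sub measurable_fst).neg.mul hxα).exp).pow_const 2).mul
        (measurable_snd.abs.pow_const (1 - 2 * H))
    exact hm.stronglyMeasurable.integral_prod_right'
  have bint : ∀ m₁ m₂ : ℝ, IntegrableOn (fun r => (s - r) ^ (2 * θ - 1) * K₁) (Ioo m₁ m₂) := by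
    intro m₁ m₂
    rcases le_or_gt m₂ m₁ with h | h
    · rw [Set.Ioo_eq_empty (not_lt.2 h)]
      exact integrableOn_empty
    · have h0 := intervalIntegral.intervalIntegrable_rpow'
        (show (-1:ℝ) < 2 * θ - 1 by linarith) (a := s - m₁) (b := s - m₂)
      have h1 := h0.comp_sub_left s
      simp only [sub_sub_cancel, sub_zero] at h1
      have h2 := h1.mul_const K₁
      rw [intervalIntegrable_iff_integrableOn_Ioc_of_le h.le] at h2
      exact h2.mono_set Set.Ioo_subset_Ioc_self
  have g1int : ∀ m₁ m₂ : ℝ, m₂ ≤ s → IntegrableOn g1 (Ioc m₁ m₂) := by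
    intro m₁ m₂ hm₂
    rw [integrableOn_Ioc_iff_integrableOn_Ioo]
    refine Integrable.mono' (bint m₁ m₂) hg1meas.aestronglyMeasurable ?_
    filter_upwards [ae_restrict_mem measurableSet_Ioo] with r hr
    rw [Real.norm_eq_abs, abs_of_nonneg (hg1nonneg r)]
    exact boundA r (lt_of_lt_of_le hr.2 hm₂)
  have int_bound1 : ∀ m : ℝ, m ≤ s →
      (∫ r in Set.Ioc m s, (s - r) ^ (2 * θ - 1) * K₁)
        = (s - m) ^ (2 * θ) / (2 * θ) * K₁ := by
    intro m hms
    rw [← intervalIntegral.integral_of_le hms,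
      intervalIntegral.integral_comp_sub_left (fun v => v ^ (2 * θ - 1) * K₁) s, sub_self,
      intervalIntegral.integral_mul_const,
      integral_rpow (Or.inl (by linarith : (-1:ℝ) < 2 * θ - 1)),
      Real.zero_rpow (ne_of_gt (by linarith : (0:ℝ) < 2 * θ - 1 + 1)),
      show 2 * θ - 1 + 1 = 2 * θ by ring]
    ring
  have pieceA : ∀ m : ℝ, m ≤ s →
      (∫ r in Set.Ioc m s, g1 r) ≤ (s - m) ^ (2 * θ) / (2 * θ) * K₁ := by
    intro m hms
    rw [integral_Ioc_eq_integral_Ioo]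
    calc (∫ r in Set.Ioo m s, g1 r)
        ≤ ∫ r in Set.Ioo m s, (s - r) ^ (2 * θ - 1) * K₁ := by
          refine integral_mono_of_nonneg
            (Filter.Eventually.of_forall fun r => hg1nonneg r) (bint m s) ?_
          filter_upwards [ae_restrict_mem measurableSet_Ioo] with r hr
          exact boundA r hr.2
      _ = (s - m) ^ (2 * θ) / (2 * θ) * K₁ := by
          rw [← integral_Ioc_eq_integral_Ioo]; exact int_bound1 m hms
  have hJ1 : (∫ r in Set.Ioc 0 s, g1 r)
      ≤ (t - s) ^ (2 * θ) / (2 * θ) * K₁ + (t - s) ^ (2 * θ) / (2 - 2 * θ) * K₂ := by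
    rcases le_or_gt s (t - s) with hcase | hcase
    · have h1 := pieceA 0 hs
      rw [sub_zero] at h1
      have h2 : s ^ (2 * θ) ≤ (t - s) ^ (2 * θ) := Real.rpow_le_rpow hs hcase h2θ.le
      have h3 : 0 ≤ (t - s) ^ (2 * θ) / (2 - 2 * θ) * K₂ := by
        have h22 : (0:ℝ) < 2 - 2 * θ := by linarith
        positivity
      have h4 : s ^ (2 * θ) / (2 * θ) * K₁ ≤ (t - s) ^ (2 * θ) / (2 * θ) * K₁ := by
        gcongr
      linarith
    · set m : ℝ := s - (t - s) with hmdef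
      have hm0 : 0 < m := by simp only [hmdef]; linarith
      have hms : m ≤ s := by simp only [hmdef]; linarith
      have hsplit : Set.Ioc 0 s = Set.Ioc 0 m ∪ Set.Ioc m s :=
        (Set.Ioc_union_Ioc_eq_Ioc hm0.le hms).symm
      rw [hsplit, setIntegral_union (Set.Ioc_disjoint_Ioc_of_le le_rfl) measurableSet_Ioc
        (g1int 0 m hms) (g1int m s le_rfl)]
      have hA : (∫ r in Set.Ioc m s, g1 r) ≤ (t - s) ^ (2 * θ) / (2 * θ) * K₁ := by
        have := pieceA m hms
        rwa [show s - m = t - s by rw [hmdef]; ring] at this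
      have hBpiece : (∫ r in Set.Ioc 0 m, g1 r)
          ≤ (t - s) ^ (2 * θ) / (2 - 2 * θ) * K₂ := by
        rw [integral_Ioc_eq_integral_Ioo]
        have hbB : IntegrableOn
            (fun r => (t - s) ^ 2 * ((s - r) ^ (2 * θ - 3) * K₂)) (Ioo 0 m) := by
          have hcont : ContinuousOn (fun r : ℝ => (s - r) ^ (2 * θ - 3)) (Icc 0 m) := by
            refine (continuousOn_const.sub continuousOn_id).rpow_const
              fun r hr => Or.inl (ne_of_gt ?_)
            have h6 : r ≤ m := hr.2
            have h7 : m = s - (t - s) := hmdef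
            simp only [Pi.sub_apply, id_eq]
            linarith
          exact ((continuousOn_const.mul
            (hcont.mul continuousOn_const)).integrableOn_Icc).mono_set
            Set.Ioo_subset_Icc_self
        have hmono : (∫ r in Set.Ioo 0 m, g1 r)
            ≤ ∫ r in Set.Ioo 0 m, (t - s) ^ 2 * ((s - r) ^ (2 * θ - 3) * K₂) := by
          refine integral_mono_of_nonneg
            (Filter.Eventually.of_forall fun r => hg1nonneg r) hbB ?_
          filter_upwards [ae_restrict_mem measurableSet_Ioo] with r hr
          exact boundB r (lt_of_lt_of_le hr.2 hms)
        refine hmono.trans ?_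
        have hval : (∫ r in Set.Ioo 0 m, (s - r) ^ (2 * θ - 3))
            = (s ^ (2 * θ - 2) - (t - s) ^ (2 * θ - 2)) / (2 * θ - 2) := by
          rw [← integral_Ioc_eq_integral_Ioo, ← intervalIntegral.integral_of_le hm0.le,
            intervalIntegral.integral_comp_sub_left (fun v => v ^ (2 * θ - 3)) s, sub_zero,
            show s - m = t - s by rw [hmdef]; ring,
            integral_rpow (Or.inr ⟨ne_of_lt (by linarith : 2 * θ - 3 < -1),
              Set.notMem_uIcc_of_lt hτ0 (by linarith : (0:ℝ) < s)⟩),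
            show 2 * θ - 3 + 1 = 2 * θ - 2 by ring]
        rw [integral_const_mul, integral_mul_const, hval]
        have hnum : (s ^ (2 * θ - 2) - (t - s) ^ (2 * θ - 2)) / (2 * θ - 2)
            ≤ (t - s) ^ (2 * θ - 2) / (2 - 2 * θ) := by
          have h1 : 0 ≤ s ^ (2 * θ - 2) := Real.rpow_nonneg hs _
          have h2 : 0 ≤ (t - s) ^ (2 * θ - 2) := Real.rpow_nonneg hτ0.le _
          have e : (s ^ (2 * θ - 2) - (t - s) ^ (2 * θ - 2)) / (2 * θ - 2)
              = ((t - s) ^ (2 * θ - 2) - s ^ (2 * θ - 2)) / (2 - 2 * θ) := by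
            rw [div_eq_div_iff (ne_of_lt (by linarith : 2 * θ - 2 < 0)) hne2]
            ring
          rw [e, div_le_div_iff₀ (by linarith) (by linarith)]
          nlinarith [mul_nonneg h1 (show (0:ℝ) ≤ 2 - 2 * θ by linarith)]
        have hpow : (t - s) ^ 2 * (t - s) ^ (2 * θ - 2) = (t - s) ^ (2 * θ) := by
          rw [← Real.rpow_natCast (t - s) 2, ← Real.rpow_add hτ0]
          congr 1
          push_cast
          ring
        calc (t - s) ^ 2 * ((s ^ (2 * θ - 2) - (t - s) ^ (2 * θ - 2)) / (2 * θ - 2) * K₂)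
            ≤ (t - s) ^ 2 * ((t - s) ^ (2 * θ - 2) / (2 - 2 * θ) * K₂) := by
              have := mul_le_mul_of_nonneg_right hnum hK₂
              have h20 : (0:ℝ) ≤ (t - s) ^ 2 := sq_nonneg _
              exact mul_le_mul_of_nonneg_left this h20
          _ = (t - s) ^ (2 * θ) / (2 - 2 * θ) * K₂ := by
              rw [← hpow]; ring
      linarith
  -- final assembly
  have hτnn : 0 ≤ (t - s) ^ (2 * θ) := Real.rpow_nonneg hτ0.le _
  have hsum : (∫ r in Set.Ioc 0 s, g1 r)
        + (∫ r in Set.Ioc s t, ∫ ξ : ℝ,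
            Real.exp (-2 * (t - r) * |ξ| ^ α) * |ξ| ^ (1 - 2 * H))
      ≤ (K₁ / θ + K₂ / (2 - 2 * θ)) * (t - s) ^ (2 * θ) := by
    have hid : (t - s) ^ (2 * θ) / (2 * θ) * K₁ + (t - s) ^ (2 * θ) / (2 - 2 * θ) * K₂
        + K₁ / (2 * θ) * (t - s) ^ (2 * θ)
        = (K₁ / θ + K₂ / (2 - 2 * θ)) * (t - s) ^ (2 * θ) := by
      field_simp
      ring
    linarith
  calc C_H * ((∫ r in Set.Ioc 0 s, g1 r)
        + ∫ r in Set.Ioc s t, ∫ ξ : ℝ,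
            Real.exp (-2 * (t - r) * |ξ| ^ α) * |ξ| ^ (1 - 2 * H))
      ≤ C_H * ((K₁ / θ + K₂ / (2 - 2 * θ)) * (t - s) ^ (2 * θ)) :=
        mul_le_mul_of_nonneg_left hsum hCH.le
    _ ≤ (C_H * (K₁ / θ + K₂ / (2 - 2 * θ)) + 1) * (t - s) ^ (2 * θ) := by nlinarith
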